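/- For every integer 1 ≤ t ≤ n and every changepoint vector τ ∈ T_t, the function φ ↦ f_τ^t(φ) is a quadratic polynomial with strictly positive leading coefficient: there exist reals a, b, c with c > 0 such that f_τ^t(φ) = a + b·φ + c·φ² for all φ ∈ ℝ. -/

import Mathlib

open Finset

/-- Segment cost `C(s,t,φ,ψ)`: cost of fitting data `y_{s+1:t}` with a linear
function taking value `φ` at time `s` and value `ψ` at time `t`. -/
noncomputable def segCost (y : ℕ → ℝ) (σ : ℝ) (s t : ℕ) (φ ψ : ℝ) : ℝ :=
  (1 / σ ^ 2) * ∑ j ∈ Finset.Icc (s + 1) t,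
    (y j - φ - ((ψ - φ) / ((t : ℝ) - (s : ℝ))) * ((j : ℝ) - (s : ℝ))) ^ 2

/-- `ValidCP t τ` : `τ` is a (possibly empty) strictly increasing vector of
changepoints `0 < τ₁ < ⋯ < τ_k < t`, i.e. an element of `T_t`. -/
def ValidCP (t : ℕ) (τ : List ℕ) : Prop :=
  τ.Chain' (· < ·) ∧ ∀ x ∈ τ, 0 < x ∧ x < t

/-- Penalised cost of segmenting `y_{1:t}` with changepoints `τ = (τ₁,…,τ_k)`,
fitted values `φs 0, …, φs k` at times `0, τ₁, …, τ_k`, and fitted value `φ` at time `t`. -/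
noncomputable def segTotal (y : ℕ → ℝ) (σ β : ℝ) (h : ℕ → ℝ) (t : ℕ)
    (τ : List ℕ) (φs : ℕ → ℝ) (φ : ℝ) : ℝ :=
  let p : ℕ → ℕ := fun i => (0 :: τ).getD i 0
  (∑ i ∈ Finset.range τ.length,
      (segCost y σ (p i) (p (i + 1)) (φs i) (φs (i + 1)) + h (p (i + 1) - p i)))
    + segCost y σ (p τ.length) t (φs τ.length) φ + h (t - p τ.length)
    + β * ((τ.length : ℝ) + 1)

/-- `f_τ^t(φ)` : minimum penalised cost of segmenting `y_{1:t}` with changepoints `τ`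
and fitted value `φ` at time `t`, minimised over the fitted values at the changepoints. -/
noncomputable def fseg (y : ℕ → ℝ) (σ β : ℝ) (h : ℕ → ℝ) (t : ℕ)
    (τ : List ℕ) (φ : ℝ) : ℝ :=
  ⨅ φs : ℕ → ℝ, segTotal y σ β h t τ φs φ

/-- `f^t(φ)` : minimum penalised cost of segmenting `y_{1:t}` with fitted value `φ`
at time `t`, minimised over all changepoint vectors in `T_t`; `f^0 ≡ 0`. -/
noncomputable def fDP (y : ℕ → ℝ) (σ β : ℝ) (h : ℕ → ℝ) (t : ℕ) (φ : ℝ) : ℝ :=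
  if t = 0 then 0 else ⨅ τ : {τ : List ℕ // ValidCP t τ}, fseg y σ β h t τ.1 φ

/-! ### Auxiliary lemmas -/

lemma quad_coeff_nonneg (A B C : ℝ) (h : ∀ x : ℝ, 0 ≤ A*x^2 + B*x + C) : 0 ≤ A := by
  by_contra hA
  push_neg at hA
  have hAne : A ≠ 0 := ne_of_lt hA
  have hnA : 0 < -A := by linarith
  have h2 : ∀ x : ℝ, 0 ≤ A * x^2 + C := by
    intro x
    have h1 := h x
    have h2 := h (-x)
    nlinarith
  have hm : 0 ≤ (|C| + 1)/(-A) := div_nonneg (by positivity) hnA.le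
  have hsq := Real.sq_sqrt hm
  have h3 := h2 (Real.sqrt ((|C| + 1)/(-A)))
  rw [hsq] at h3
  have : A * ((|C| + 1)/(-A)) = -(|C| + 1) := by field_simp
  nlinarith [le_abs_self C, abs_nonneg C]

lemma quad_pos_of_lb (Y K a b c σ : ℝ) (hσ : 0 < σ)
    (h : ∀ φ : ℝ, (1/σ^2) * (Y - φ)^2 + K ≤ a + b*φ + c*φ^2) : 0 < c := by
  have h2 : ∀ x : ℝ, 0 ≤ (c - 1/σ^2)*x^2 + (b + 2*Y*(1/σ^2))*x + (a - K - Y^2*(1/σ^2)) := by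
    intro x
    have h1 := h x
    ring_nf at h1 ⊢
    linarith
  have := quad_coeff_nonneg _ _ _ h2
  have : (0:ℝ) < 1/σ^2 := by positivity
  linarith

lemma inf_quad (A B D : ℝ) (hA : 0 < A) :
    ⨅ x : ℝ, (A*x^2 + B*x + D) = D - B^2/(4*A) := by
  have hlb : ∀ x : ℝ, D - B^2/(4*A) ≤ A*x^2 + B*x + D := by
    intro x
    have key : A*x^2 + B*x + D - (D - B^2/(4*A)) = (2*A*x+B)^2/(4*A) := by
      field_simp; ring
    have : 0 ≤ (2*A*x+B)^2/(4*A) := div_nonneg (sq_nonneg _) (by linarith)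
    linarith
  apply le_antisymm
  · have := ciInf_le (f := fun x : ℝ => A*x^2 + B*x + D)
      ⟨D - B^2/(4*A), by rintro _ ⟨x, rfl⟩; exact hlb x⟩ (-B/(2*A))
    calc ⨅ x : ℝ, (A*x^2 + B*x + D) ≤ A*(-B/(2*A))^2 + B*(-B/(2*A)) + D := this
      _ = D - B^2/(4*A) := by field_simp; ring
  · exact le_ciInf hlb

lemma inf_quad_2var (a b c S20 S11 S02 S10 S01 S00 Cst : ℝ) (hA : 0 < c + S20) :
    ∃ a' b' c' : ℝ, ∀ φ : ℝ,
      (⨅ ψ : ℝ, ((a + b*ψ + c*ψ^2)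
        + (S20*ψ^2 + S11*(ψ*φ) + S02*φ^2 + S10*ψ + S01*φ + S00) + Cst))
      = a' + b'*φ + c'*φ^2 := by
  have hAne : c + S20 ≠ 0 := ne_of_gt hA
  refine ⟨a + S00 + Cst - (b+S10)^2/(4*(c+S20)),
    S01 - (b+S10)*S11/(2*(c+S20)), S02 - S11^2/(4*(c+S20)), fun φ => ?_⟩
  have hfun : (fun ψ : ℝ => (a + b*ψ + c*ψ^2)
        + (S20*ψ^2 + S11*(ψ*φ) + S02*φ^2 + S10*ψ + S01*φ + S00) + Cst)
      = fun ψ : ℝ => (c+S20)*ψ^2 + (b + S10 + S11*φ)*ψ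
        + (a + S02*φ^2 + S01*φ + S00 + Cst) := by
    funext ψ; ring
  rw [hfun, inf_quad _ _ _ hA]
  field_simp
  ring

lemma segCost_nonneg (y : ℕ → ℝ) (σ : ℝ) (s t : ℕ) (φ ψ : ℝ) :
    0 ≤ segCost y σ s t φ ψ := by
  unfold segCost
  apply mul_nonneg (by positivity)
  exact Finset.sum_nonneg fun j _ => sq_nonneg _

lemma segCost_ge (y : ℕ → ℝ) (σ : ℝ) (hσ : 0 < σ) (s t : ℕ) (hst : s < t) (χ φ : ℝ) :
    (1/σ^2) * (y t - φ)^2 ≤ segCost y σ s t χ φ := by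
  unfold segCost
  have hmem : t ∈ Finset.Icc (s+1) t := by
    simp [Nat.succ_le_iff, hst]
  have hd : ((t:ℝ) - (s:ℝ)) ≠ 0 := by
    have : (s:ℝ) < (t:ℝ) := by exact_mod_cast hst
    linarith
  have hterm : (y t - χ - ((φ - χ) / ((t : ℝ) - (s : ℝ))) * ((t : ℝ) - (s : ℝ)))^2
      = (y t - φ)^2 := by
    rw [div_mul_cancel₀ _ hd]; ring
  have hs : (y t - φ)^2 ≤ ∑ j ∈ Finset.Icc (s + 1) t,
      (y j - χ - ((φ - χ) / ((t : ℝ) - (s : ℝ))) * ((j : ℝ) - (s : ℝ))) ^ 2 := by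
    rw [← hterm]
    exact Finset.single_le_sum
      (f := fun j => (y j - χ - ((φ - χ) / ((t : ℝ) - (s : ℝ))) * ((j : ℝ) - (s : ℝ))) ^ 2)
      (fun j _ => sq_nonneg _) hmem
  have hp : (0:ℝ) ≤ 1/σ^2 := by positivity
  calc (1/σ^2) * (y t - φ)^2 ≤ (1/σ^2) * ∑ j ∈ Finset.Icc (s + 1) t,
      (y j - χ - ((φ - χ) / ((t : ℝ) - (s : ℝ))) * ((j : ℝ) - (s : ℝ))) ^ 2 :=
        mul_le_mul_of_nonneg_left hs hp
    _ = _ := rfl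

/-- full quadratic expansion of `segCost` in `(χ, φ)` (values at `s` and `t`). -/
lemma segCost_expand (y : ℕ → ℝ) (σ : ℝ) (s t : ℕ) (χ φ : ℝ) :
    segCost y σ s t χ φ =
      ((1/σ^2) * ∑ j ∈ Finset.Icc (s+1) t, (1 - ((j:ℝ)-(s:ℝ))/((t:ℝ)-(s:ℝ)))^2) * χ^2
    + ((1/σ^2) * ∑ j ∈ Finset.Icc (s+1) t, 2*(1 - ((j:ℝ)-(s:ℝ))/((t:ℝ)-(s:ℝ)))*(((j:ℝ)-(s:ℝ))/((t:ℝ)-(s:ℝ)))) * (χ*φ)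
    + ((1/σ^2) * ∑ j ∈ Finset.Icc (s+1) t, (((j:ℝ)-(s:ℝ))/((t:ℝ)-(s:ℝ)))^2) * φ^2
    + ((1/σ^2) * ∑ j ∈ Finset.Icc (s+1) t, (-2)*(1 - ((j:ℝ)-(s:ℝ))/((t:ℝ)-(s:ℝ)))*(y j)) * χ
    + ((1/σ^2) * ∑ j ∈ Finset.Icc (s+1) t, (-2)*(((j:ℝ)-(s:ℝ))/((t:ℝ)-(s:ℝ)))*(y j)) * φ
    + ((1/σ^2) * ∑ j ∈ Finset.Icc (s+1) t, (y j)^2) := by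
  unfold segCost
  calc (1/σ^2) * ∑ j ∈ Finset.Icc (s + 1) t,
        (y j - χ - ((φ - χ) / ((t : ℝ) - (s : ℝ))) * ((j : ℝ) - (s : ℝ))) ^ 2
      = (1/σ^2) * ∑ j ∈ Finset.Icc (s + 1) t,
        ((1 - ((j:ℝ)-(s:ℝ))/((t:ℝ)-(s:ℝ)))^2 * χ^2
        + (2*(1 - ((j:ℝ)-(s:ℝ))/((t:ℝ)-(s:ℝ)))*(((j:ℝ)-(s:ℝ))/((t:ℝ)-(s:ℝ)))) * (χ*φ)
        + ((((j:ℝ)-(s:ℝ))/((t:ℝ)-(s:ℝ)))^2) * φ^2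
        + ((-2)*(1 - ((j:ℝ)-(s:ℝ))/((t:ℝ)-(s:ℝ)))*(y j)) * χ
        + ((-2)*(((j:ℝ)-(s:ℝ))/((t:ℝ)-(s:ℝ)))*(y j)) * φ
        + (y j)^2) := by
          refine congrArg _ (Finset.sum_congr rfl fun j _ => ?_)
          ring
    _ = _ := by
          simp only [Finset.sum_add_distrib, ← Finset.sum_mul]
          ring

/-- the additive constant in the lower bound for `segTotal`. -/
noncomputable def Kc (β : ℝ) (h : ℕ → ℝ) (t : ℕ) (τ : List ℕ) : ℝ :=
  (∑ i ∈ Finset.range τ.length,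
      h ((0 :: τ).getD (i+1) 0 - (0 :: τ).getD i 0))
    + h (t - (0 :: τ).getD τ.length 0) + β * ((τ.length : ℝ) + 1)

lemma p_lt (t : ℕ) (τ : List ℕ) (hτ : ValidCP t τ) (ht : 1 ≤ t) (i : ℕ) :
    (0 :: τ).getD i 0 < t := by
  rcases Nat.eq_zero_or_pos i with rfl | hi
  · simpa using Nat.succ_le_iff.mp ht
  · obtain ⟨k, rfl⟩ := Nat.exists_eq_add_of_lt hi
    simp only [Nat.zero_add, List.getD_cons_succ]
    rcases Nat.lt_or_ge k τ.length with hk | hk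
    · have : τ.getD k 0 ∈ τ := by
        rw [List.getD_eq_getElem τ 0 hk]
        exact List.getElem_mem _
      exact (hτ.2 _ this).2
    · rw [List.getD_eq_default τ 0 hk]
      exact ht

lemma segTotal_lb (y : ℕ → ℝ) (σ β : ℝ) (hσ : 0 < σ) (h : ℕ → ℝ) (t : ℕ) (ht : 1 ≤ t)
    (τ : List ℕ) (hτ : ValidCP t τ) (φs : ℕ → ℝ) (φ : ℝ) :
    (1/σ^2) * (y t - φ)^2 + Kc β h t τ ≤ segTotal y σ β h t τ φs φ := by
  unfold segTotal Kc
  simp only []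
  have h1 : ∑ i ∈ Finset.range τ.length, h ((0 :: τ).getD (i+1) 0 - (0 :: τ).getD i 0)
      ≤ ∑ i ∈ Finset.range τ.length,
        (segCost y σ ((0 :: τ).getD i 0) ((0 :: τ).getD (i+1) 0) (φs i) (φs (i + 1))
          + h ((0 :: τ).getD (i+1) 0 - (0 :: τ).getD i 0)) :=
    Finset.sum_le_sum fun i _ => le_add_of_nonneg_left (segCost_nonneg _ _ _ _ _ _)
  have h2 := segCost_ge y σ hσ ((0 :: τ).getD τ.length 0) t (p_lt t τ hτ ht _) (φs τ.length) φ
  linarith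

lemma fseg_lb (y : ℕ → ℝ) (σ β : ℝ) (hσ : 0 < σ) (h : ℕ → ℝ) (t : ℕ) (ht : 1 ≤ t)
    (τ : List ℕ) (hτ : ValidCP t τ) (φ : ℝ) :
    (1/σ^2) * (y t - φ)^2 + Kc β h t τ ≤ fseg y σ β h t τ φ :=
  le_ciInf fun φs => segTotal_lb y σ β hσ h t ht τ hτ φs φ

lemma segTotal_bdd (y : ℕ → ℝ) (σ β : ℝ) (hσ : 0 < σ) (h : ℕ → ℝ) (t : ℕ) (ht : 1 ≤ t)
    (τ : List ℕ) (hτ : ValidCP t τ) (φ : ℝ) :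
    BddBelow (Set.range fun φs : ℕ → ℝ => segTotal y σ β h t τ φs φ) :=
  ⟨(1/σ^2) * (y t - φ)^2 + Kc β h t τ, by
    rintro _ ⟨φs, rfl⟩; exact segTotal_lb y σ β hσ h t ht τ hτ φs φ⟩

lemma segTotal_congr (y : ℕ → ℝ) (σ β : ℝ) (h : ℕ → ℝ) (t : ℕ) (τ : List ℕ)
    (φs φs' : ℕ → ℝ) (φ : ℝ) (hφs : ∀ i ≤ τ.length, φs i = φs' i) :
    segTotal y σ β h t τ φs φ = segTotal y σ β h t τ φs' φ := by
  unfold segTotal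
  simp only []
  rw [hφs τ.length le_rfl]
  have hsum : ∑ i ∈ Finset.range τ.length,
      (segCost y σ ((0 :: τ).getD i 0) ((0 :: τ).getD (i+1) 0) (φs i) (φs (i + 1))
        + h ((0 :: τ).getD (i+1) 0 - (0 :: τ).getD i 0))
      = ∑ i ∈ Finset.range τ.length,
      (segCost y σ ((0 :: τ).getD i 0) ((0 :: τ).getD (i+1) 0) (φs' i) (φs' (i + 1))
        + h ((0 :: τ).getD (i+1) 0 - (0 :: τ).getD i 0)) := by
    refine Finset.sum_congr rfl fun i hi => ?_
    rw [Finset.mem_range] at hi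
    rw [hφs i hi.le, hφs (i+1) hi]
  rw [hsum]

lemma segTotal_append (y : ℕ → ℝ) (σ β : ℝ) (h : ℕ → ℝ) (t s : ℕ)
    (τ : List ℕ) (φs : ℕ → ℝ) (φ : ℝ) :
    segTotal y σ β h t (τ ++ [s]) φs φ
      = segTotal y σ β h s τ φs (φs (τ.length + 1))
        + segCost y σ s t (φs (τ.length + 1)) φ + h (t - s) + β := by
  unfold segTotal
  simp only [List.length_append, List.length_cons, List.length_nil]
  have hp : ∀ i ≤ τ.length, (0 :: (τ ++ [s])).getD i 0 = (0 :: τ).getD i 0 := by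
    intro i hi
    rw [show (0 :: (τ ++ [s])) = (0 :: τ) ++ [s] by simp]
    exact List.getD_append _ _ _ _ (by simp; omega)
  have hps : (0 :: (τ ++ [s])).getD (τ.length + 1) 0 = s := by
    rw [show (0 :: (τ ++ [s])) = (0 :: τ) ++ [s] by simp]
    rw [List.getD_append_right _ _ _ _ (by simp)]
    simp
  rw [Finset.sum_range_succ]
  rw [hps]
  have hsum : ∑ i ∈ Finset.range τ.length,
      (segCost y σ ((0 :: (τ ++ [s])).getD i 0) ((0 :: (τ ++ [s])).getD (i+1) 0) (φs i) (φs (i + 1))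
        + h ((0 :: (τ ++ [s])).getD (i+1) 0 - (0 :: (τ ++ [s])).getD i 0))
      = ∑ i ∈ Finset.range τ.length,
      (segCost y σ ((0 :: τ).getD i 0) ((0 :: τ).getD (i+1) 0) (φs i) (φs (i + 1))
        + h ((0 :: τ).getD (i+1) 0 - (0 :: τ).getD i 0)) := by
    refine Finset.sum_congr rfl fun i hi => ?_
    rw [Finset.mem_range] at hi
    rw [hp i hi.le, hp (i+1) hi]
  rw [hsum, hp τ.length le_rfl]
  push_cast
  ring

lemma fseg_append (y : ℕ → ℝ) (σ β : ℝ) (hσ : 0 < σ) (h : ℕ → ℝ) (t s : ℕ)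
    (τ : List ℕ) (hs : 1 ≤ s) (hst : s < t)
    (hτs : ValidCP s τ) (hτt : ValidCP t (τ ++ [s]))
    (a b c : ℝ) (hc : 0 < c) (hq : ∀ ψ, fseg y σ β h s τ ψ = a + b*ψ + c*ψ^2) (φ : ℝ) :
    fseg y σ β h t (τ ++ [s]) φ
      = ⨅ ψ : ℝ, (fseg y σ β h s τ ψ + segCost y σ s t ψ φ + h (t - s) + β) := by
  have ht : 1 ≤ t := le_trans hs hst.le
  have hRHSlb : ∀ ψ : ℝ, a - b^2/(4*c) + h (t - s) + β
      ≤ fseg y σ β h s τ ψ + segCost y σ s t ψ φ + h (t - s) + β := by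
    intro ψ
    have h1 : a - b^2/(4*c) ≤ a + b*ψ + c*ψ^2 := by
      have key : a + b*ψ + c*ψ^2 - (a - b^2/(4*c)) = (2*c*ψ+b)^2/(4*c) := by
        field_simp; ring
      have : 0 ≤ (2*c*ψ+b)^2/(4*c) := div_nonneg (sq_nonneg _) (by linarith)
      linarith
    have h2 := segCost_nonneg y σ s t ψ φ
    rw [hq ψ]
    linarith
  apply le_antisymm
  · refine le_ciInf fun ψ => ?_
    have key : ∀ φs : ℕ → ℝ,
        fseg y σ β h t (τ ++ [s]) φ - (segCost y σ s t ψ φ + h (t - s) + β)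
          ≤ segTotal y σ β h s τ φs ψ := by
      intro φs
      set φs' := Function.update φs (τ.length + 1) ψ with hφs'
      have e1 : segTotal y σ β h s τ φs' (φs' (τ.length + 1)) = segTotal y σ β h s τ φs ψ := by
        rw [show φs' (τ.length + 1) = ψ from Function.update_self _ _ _]
        refine segTotal_congr y σ β h s τ φs' φs ψ fun i hi => ?_
        exact Function.update_of_ne (by omega) _ _
      have e2 : fseg y σ β h t (τ ++ [s]) φ ≤ segTotal y σ β h t (τ ++ [s]) φs' φ :=
        ciInf_le (segTotal_bdd y σ β hσ h t ht _ hτt φ) φs'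
      rw [segTotal_append, e1,
        show φs' (τ.length + 1) = ψ from Function.update_self _ _ _] at e2
      linarith
    have h3 : fseg y σ β h t (τ ++ [s]) φ - (segCost y σ s t ψ φ + h (t - s) + β)
        ≤ fseg y σ β h s τ ψ := le_ciInf key
    linarith
  · refine le_ciInf fun φs => ?_
    rw [segTotal_append]
    have h1 : fseg y σ β h s τ (φs (τ.length + 1))
        ≤ segTotal y σ β h s τ φs (φs (τ.length + 1)) :=
      ciInf_le (segTotal_bdd y σ β hσ h s hs _ hτs _) φs
    have h2 : (⨅ ψ : ℝ, (fseg y σ β h s τ ψ + segCost y σ s t ψ φ + h (t - s) + β))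
        ≤ fseg y σ β h s τ (φs (τ.length + 1))
          + segCost y σ s t (φs (τ.length + 1)) φ + h (t - s) + β :=
      ciInf_le ⟨a - b^2/(4*c) + h (t - s) + β, by
        rintro _ ⟨ψ, rfl⟩; exact hRHSlb ψ⟩ (φs (τ.length + 1))
    linarith

lemma iInf_eval0 (G : ℝ → ℝ) (hb : BddBelow (Set.range G)) :
    (⨅ φs : ℕ → ℝ, G (φs 0)) = ⨅ x : ℝ, G x := by
  apply le_antisymm
  · refine le_ciInf fun x => ?_
    refine ciInf_le ?_ (fun _ => x)
    obtain ⟨m, hm⟩ := hb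
    exact ⟨m, by rintro _ ⟨φs, rfl⟩; exact hm ⟨φs 0, rfl⟩⟩
  · exact le_ciInf fun φs => ciInf_le hb (φs 0)

lemma quad_lb (A B D : ℝ) (hA : 0 < A) (x : ℝ) : D - B^2/(4*A) ≤ A*x^2 + B*x + D := by
  have key : A*x^2 + B*x + D - (D - B^2/(4*A)) = (2*A*x+B)^2/(4*A) := by
    field_simp; ring
  have : 0 ≤ (2*A*x+B)^2/(4*A) := div_nonneg (sq_nonneg _) (by linarith)
  linarith

lemma segCost_expand' (y : ℕ → ℝ) (σ : ℝ) (hσ : 0 < σ) (s t : ℕ) :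
    ∃ S20 S11 S02 S10 S01 S00 : ℝ, 0 ≤ S20 ∧ (s + 2 ≤ t → 0 < S20) ∧
      ∀ χ φ : ℝ, segCost y σ s t χ φ
        = S20*χ^2 + S11*(χ*φ) + S02*φ^2 + S10*χ + S01*φ + S00 := by
  refine ⟨_, _, _, _, _, _, ?_, ?_, fun χ φ => segCost_expand y σ s t χ φ⟩
  · exact mul_nonneg (by positivity) (Finset.sum_nonneg fun j _ => sq_nonneg _)
  · intro h2
    apply mul_pos (by positivity)
    apply Finset.sum_pos' (fun j _ => sq_nonneg _)
    refine ⟨s+1, by simp [Finset.mem_Icc]; omega, ?_⟩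
    have hd : (2:ℝ) ≤ (t:ℝ) - (s:ℝ) := by
      have h3 : ((s+2:ℕ):ℝ) ≤ (t:ℝ) := by exact_mod_cast h2
      push_cast at h3
      linarith
    have hpos : (0:ℝ) < 1 - (((s+1:ℕ):ℝ) - (s:ℝ))/((t:ℝ) - (s:ℝ)) := by
      push_cast
      rw [show (s:ℝ) + 1 - (s:ℝ) = 1 by ring, sub_pos, div_lt_one (by linarith)]
      linarith
    exact pow_pos hpos 2

lemma inf_quad_2var_fun (a b c S20 S11 S02 S10 S01 S00 Cst : ℝ) (hA : 0 < c + S20) :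
    ∃ a' b' c' : ℝ, ∀ φ : ℝ,
      (⨅ φs : ℕ → ℝ, ((a + b*(φs 0) + c*(φs 0)^2)
        + (S20*(φs 0)^2 + S11*((φs 0)*φ) + S02*φ^2 + S10*(φs 0) + S01*φ + S00) + Cst))
      = a' + b'*φ + c'*φ^2 := by
  obtain ⟨a', b', c', hq⟩ := inf_quad_2var a b c S20 S11 S02 S10 S01 S00 Cst hA
  refine ⟨a', b', c', fun φ => ?_⟩
  rw [← hq φ]
  refine iInf_eval0 (fun x => ((a + b*x + c*x^2)
      + (S20*x^2 + S11*(x*φ) + S02*φ^2 + S10*x + S01*φ + S00) + Cst)) ?_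
  refine ⟨(a + S02*φ^2 + S01*φ + S00 + Cst) - (b + S10 + S11*φ)^2/(4*(c+S20)), ?_⟩
  rintro _ ⟨x, rfl⟩
  have heq : ((a + b*x + c*x^2)
      + (S20*x^2 + S11*(x*φ) + S02*φ^2 + S10*x + S01*φ + S00) + Cst)
      = (c+S20)*x^2 + (b + S10 + S11*φ)*x + (a + S02*φ^2 + S01*φ + S00 + Cst) := by ring
  calc (a + S02*φ^2 + S01*φ + S00 + Cst) - (b + S10 + S11*φ)^2/(4*(c+S20))
      ≤ (c+S20)*x^2 + (b + S10 + S11*φ)*x + (a + S02*φ^2 + S01*φ + S00 + Cst) :=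
        quad_lb _ _ _ hA x
    _ = _ := heq.symm

lemma main_lemma (y : ℕ → ℝ) (σ β : ℝ) (hσ : 0 < σ) (h : ℕ → ℝ) :
    ∀ (τ : List ℕ) (t : ℕ), 1 ≤ t → ValidCP t τ →
    ∃ a b c : ℝ, 0 < c ∧ ∀ φ : ℝ, fseg y σ β h t τ φ = a + b*φ + c*φ^2 := by
  intro τ
  induction τ using List.reverseRecOn with
  | nil =>
    intro t ht _
    suffices hex : ∃ a b c : ℝ, ∀ φ : ℝ, fseg y σ β h t [] φ = a + b*φ + c*φ^2 by
      obtain ⟨a, b, c, heq⟩ := hex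
      refine ⟨a, b, c, ?_, heq⟩
      refine quad_pos_of_lb (y t) (Kc β h t []) a b c σ hσ fun φ => ?_
      rw [← heq φ]
      exact fseg_lb y σ β hσ h t ht [] ⟨List.isChain_nil, by simp⟩ φ
    have hTot : ∀ (φs : ℕ → ℝ) (φ : ℝ), segTotal y σ β h t [] φs φ
        = segCost y σ 0 t (φs 0) φ + h t + β := by
      intro φs φ
      unfold segTotal
      simp
    rcases eq_or_lt_of_le ht with h1 | h2
    · -- t = 1
      have ht1 : t = 1 := h1.symm
      subst ht1
      have hsc : ∀ x φ : ℝ, segCost y σ 0 1 x φ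
          = (1/σ^2)*(y 1)^2 + ((-2)*(y 1)*(1/σ^2))*φ + (1/σ^2)*φ^2 := by
        intro x φ
        unfold segCost
        rw [show Finset.Icc (0+1) 1 = {1} by rfl]
        rw [Finset.sum_singleton]
        push_cast
        ring_nf
      refine ⟨(1/σ^2)*(y 1)^2 + h 1 + β, (-2)*(y 1)*(1/σ^2), 1/σ^2, fun φ => ?_⟩
      unfold fseg
      have hconst : (fun φs : ℕ → ℝ => segTotal y σ β h 1 [] φs φ)
          = fun _ : ℕ → ℝ =>
            (1/σ^2)*(y 1)^2 + ((-2)*(y 1)*(1/σ^2))*φ + (1/σ^2)*φ^2 + h 1 + β := by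
        funext φs
        rw [hTot φs φ, hsc (φs 0) φ]
      rw [hconst, ciInf_const]
      ring
    · -- 2 ≤ t
      have ht2 : 2 ≤ t := h2
      obtain ⟨S20, S11, S02, S10, S01, S00, hS20, hS20pos, hexp⟩ :=
        segCost_expand' y σ hσ 0 t
      have hA : (0:ℝ) < 0 + S20 := by
        have := hS20pos (by omega)
        linarith
      obtain ⟨a', b', c', hq'⟩ :=
        inf_quad_2var_fun 0 0 0 S20 S11 S02 S10 S01 S00 (h t + β) hA
      refine ⟨a', b', c', fun φ => ?_⟩
      rw [← hq' φ]
      unfold fseg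
      congr 1
      funext φs
      rw [hTot φs φ, hexp (φs 0) φ]
      ring
  | append_singleton τ s ih =>
    intro t ht hτ
    have hsmem : s ∈ τ ++ [s] := by simp
    have hs1 : 1 ≤ s := (hτ.2 s hsmem).1
    have hst : s < t := (hτ.2 s hsmem).2
    have hpw : List.Pairwise (· < ·) (τ ++ [s]) := List.isChain_iff_pairwise.mp hτ.1
    rw [List.pairwise_append] at hpw
    have hτs : ValidCP s τ := by
      refine ⟨List.isChain_iff_pairwise.mpr hpw.1, fun x hx => ?_⟩
      exact ⟨(hτ.2 x (by simp [hx])).1, hpw.2.2 x hx s (by simp)⟩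
    obtain ⟨a, b, c, hc, hq⟩ := ih s hs1 hτs
    suffices hex : ∃ a' b' c' : ℝ, ∀ φ : ℝ,
        fseg y σ β h t (τ ++ [s]) φ = a' + b'*φ + c'*φ^2 by
      obtain ⟨a', b', c', heq⟩ := hex
      refine ⟨a', b', c', ?_, heq⟩
      refine quad_pos_of_lb (y t) (Kc β h t (τ ++ [s])) a' b' c' σ hσ fun φ => ?_
      rw [← heq φ]
      exact fseg_lb y σ β hσ h t ht (τ ++ [s]) hτ φ
    obtain ⟨S20, S11, S02, S10, S01, S00, hS20, _, hexp⟩ :=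
      segCost_expand' y σ hσ s t
    have hA : (0:ℝ) < c + S20 := by linarith
    obtain ⟨a', b', c', hq'⟩ :=
      inf_quad_2var a b c S20 S11 S02 S10 S01 S00 (h (t - s) + β) hA
    refine ⟨a', b', c', fun φ => ?_⟩
    rw [fseg_append y σ β hσ h t s τ hs1 hst hτs hτ a b c hc hq φ, ← hq' φ]
    congr 1
    funext ψ
    rw [hq ψ, hexp ψ φ]
    ring

/-- each `f_τ^t` is a quadratic in `φ` with strictly positive
leading coefficient. -/
theorem statement5 (n : ℕ) (hn : 1 ≤ n) (y : ℕ → ℝ) (σ : ℝ) (hσ : 0 < σ)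
    (β : ℝ) (hβ : 0 < β) (h : ℕ → ℝ)
    (t : ℕ) (ht1 : 1 ≤ t) (htn : t ≤ n)
    (τ : List ℕ) (hτ : ValidCP t τ) :
    ∃ a b c : ℝ, 0 < c ∧ ∀ φ : ℝ, fseg y σ β h t τ φ = a + b * φ + c * φ ^ 2 := by
  obtain ⟨a, b, c, hc, heq⟩ := main_lemma y σ β hσ h τ t ht1 hτ
  exact ⟨a, b, c, hc, heq⟩
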